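/- arXiv:1511.01960 — 6 statements merged into one kernel-verified Lean document; each statement's English description precedes it below -/
import Mathlib

section
/- Let (M,s) be an S5 pointed Kripke structure in which every world is reachable from s, and let ψ be a fluent (propositional) formula. Then (M,s) ⊨ C(B_i ψ ∨ B_i ¬ψ) if and only if for all worlds u, v of M with (u,v) ∈ B_i, the interpretation of u satisfies ψ exactly when the interpretation of v satisfies ψ. -/
/-- Belief formulae over a set of agents `A` and a set of fluents `F`:
propositional formulae extended with belief operators `B_i` (`bel`),
group knowledge `E_α` (`ebel`) and common knowledge `C_α` (`cbel`). -/
inductive BForm (A F : Type) : Type where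
  | top  : BForm A F
  | atom : F → BForm A F
  | neg  : BForm A F → BForm A F
  | conj : BForm A F → BForm A F → BForm A F
  | disj : BForm A F → BForm A F → BForm A F
  | bel  : A → BForm A F → BForm A F
  | ebel : Set A → BForm A F → BForm A F
  | cbel : Set A → BForm A F → BForm A F

/-- A Kripke structure: a valuation of fluents at each world and an
accessibility relation for each agent. -/
structure Kripke (A W F : Type) where
  val : W → F → Prop
  rel : A → W → W → Prop

/-- Iterated group operator: `Esat M α P k w` says `E_α^k P` holds at `w`. -/
def Esat {A W F : Type} (M : Kripke A W F) (α : Set A) (P : W → Prop) : ℕ → W → Prop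
  | 0, w => P w
  | k + 1, w => ∀ i ∈ α, ∀ v, M.rel i w v → Esat M α P k v

/-- Kripke satisfaction of belief formulae.  Common knowledge `C_α φ` holds at
`w` iff `E_α^k φ` holds at `w` for every `k ≥ 0`. -/
def sat {A W F : Type} (M : Kripke A W F) : W → BForm A F → Prop
  | _, .top => True
  | w, .atom f => M.val w f
  | w, .neg φ => ¬ sat M w φ
  | w, .conj φ ψ => sat M w φ ∧ sat M w ψ
  | w, .disj φ ψ => sat M w φ ∨ sat M w ψ
  | w, .bel i φ => ∀ v, M.rel i w v → sat M v φ
  | w, .ebel α φ => ∀ i ∈ α, ∀ v, M.rel i w v → sat M v φ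
  | w, .cbel α φ => ∀ k : ℕ, Esat M α (fun v => sat M v φ) k w

/-- `M` is an S5 structure: each accessibility relation is an equivalence
relation (reflexive, symmetric, transitive). -/
def S5 {A W F : Type} (M : Kripke A W F) : Prop := ∀ i, Equivalence (M.rel i)

/-- Reachability via finite paths over the union of all accessibility relations. -/
def reach {A W F : Type} (M : Kripke A W F) : W → W → Prop :=
  Relation.ReflTransGen (fun u v => ∃ i, M.rel i u v)

/-- Reachability via finite paths labeled by agents in `α` only. -/
def reachIn {A W F : Type} (M : Kripke A W F) (α : Set A) : W → W → Prop :=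
  Relation.ReflTransGen (fun u v => ∃ i ∈ α, M.rel i u v)

/-- Two pointed Kripke structures are equivalent if they satisfy the same
belief formulae. -/
def equivState {A W W' F : Type} (M : Kripke A W F) (s : W) (M' : Kripke A W' F) (s' : W') : Prop :=
  ∀ φ : BForm A F, sat M s φ ↔ sat M' s' φ

/-- Fluent (purely propositional) formulae: no modal operators. -/
def IsProp {A F : Type} : BForm A F → Prop
  | .top => True
  | .atom _ => True
  | .neg φ => IsProp φ
  | .conj φ ψ => IsProp φ ∧ IsProp ψ
  | .disj φ ψ => IsProp φ ∧ IsProp ψ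
  | .bel _ _ => False
  | .ebel _ _ => False
  | .cbel _ _ => False

/-- In an S5 state with all worlds reachable from `s`, for a
fluent formula `ψ`: `(M,s) ⊨ C(B_i ψ ∨ B_i ¬ψ)` iff any two `B_i`-related
worlds give `ψ` the same truth value. -/
theorem stmt2 {A W F : Type} (M : Kripke A W F) (s : W) (i : A)
    (h5 : S5 M) (hr : ∀ u : W, reach M s u)
    (ψ : BForm A F) (hψ : IsProp ψ) :
    sat M s (.cbel Set.univ (.disj (.bel i ψ) (.bel i (.neg ψ)))) ↔
      ∀ u v : W, M.rel i u v → (sat M u ψ ↔ sat M v ψ) := by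
  constructor
  · intro hC u v huv
    -- transport `∀ k, Esat` along reachability
    have key : ∀ w, reach M s w →
        (∀ k, Esat M Set.univ (fun t => sat M t (.disj (.bel i ψ) (.bel i (.neg ψ)))) k w) := by
      intro w hw
      induction hw with
      | refl => exact hC
      | tail _ hbc ih =>
        obtain ⟨j, hj⟩ := hbc
        intro k
        exact ih (k + 1) j (Set.mem_univ j) _ hj
    have hu := key u (hr u) 0
    -- `hu : sat M u (.disj (.bel i ψ) (.bel i (.neg ψ)))`
    rcases hu with h1 | h1
    · exact ⟨fun _ => h1 v huv, fun _ => h1 u ((h5 i).refl u)⟩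
    · exact ⟨fun h => absurd h (h1 u ((h5 i).refl u)), fun h => absurd h (h1 v huv)⟩
  · intro h
    have hall : ∀ w : W, sat M w (.disj (.bel i ψ) (.bel i (.neg ψ))) := by
      intro w
      by_cases hw : sat M w ψ
      · exact Or.inl fun v hv => (h w v hv).mp hw
      · exact Or.inr fun v hv => fun hc => hw ((h w v hv).mpr hc)
    have hE : ∀ k w, Esat M Set.univ
        (fun t => sat M t (.disj (.bel i ψ) (.bel i (.neg ψ)))) k w := by
      intro k
      induction k with
      | zero => exact hall
      | succ k ih => exact fun w j _ v _ => ih v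
    exact fun k => hE k s
end

section
/- Let (M,s) be an initial S5-state of a definite action theory in which every world is reachable from s. If u ∼ v (i.e., π(u) = π(v)) and (u,x) ∈ B_i, then there exists a world y with (v,y) ∈ B_i and x ∼ y. In other words, the relation ∼ of having identical valuations is a bisimulation with respect to each accessibility relation B_i. -/
/-- The forms of initial statements of a definite action theory:
`initially φ`, `initially C φ`, `initially C(B_i φ)`,
`initially C(B_i φ ∨ B_i ¬φ)`, `initially C(¬B_i φ ∧ ¬B_i ¬φ)`. -/
inductive InitStmt (A F : Type) : Type where
  | base : BForm A F → InitStmt A F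
  | common : BForm A F → InitStmt A F
  | cBel : A → BForm A F → InitStmt A F
  | cWhether : A → BForm A F → InitStmt A F
  | cIgnorant : A → BForm A F → InitStmt A F

/-- The belief formula expressed by an initial statement (`C` is common
knowledge among all agents). -/
def InitStmt.form {A F : Type} : InitStmt A F → BForm A F
  | .base φ => φ
  | .common φ => .cbel Set.univ φ
  | .cBel i φ => .cbel Set.univ (.bel i φ)
  | .cWhether i φ => .cbel Set.univ (.disj (.bel i φ) (.bel i (.neg φ)))
  | .cIgnorant i φ => .cbel Set.univ (.conj (.neg (.bel i φ)) (.neg (.bel i (.neg φ))))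

/-- The fluent formula occurring in an initial statement. -/
def InitStmt.inner {A F : Type} : InitStmt A F → BForm A F
  | .base φ => φ
  | .common φ => φ
  | .cBel _ φ => φ
  | .cWhether _ φ => φ
  | .cIgnorant _ φ => φ

/-- A definite action theory: a set of initial statements whose embedded
formulae are fluent formulae, such that for each fluent formula `φ` and agent
`i` one of the statements `C(B_i φ)`, `C(B_i φ ∨ B_i ¬φ)`,
`C(¬B_i φ ∧ ¬B_i ¬φ)` belongs to the theory. -/
structure DefiniteTheory (A F : Type) where
  stmts : Set (InitStmt A F)
  wf : ∀ st ∈ stmts, IsProp st.inner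
  definite : ∀ φ : BForm A F, IsProp φ → ∀ i : A,
    InitStmt.cBel i φ ∈ stmts ∨ InitStmt.cWhether i φ ∈ stmts ∨ InitStmt.cIgnorant i φ ∈ stmts

/-- `(M,s)` is an initial state of the theory `T`: it satisfies every initial
statement of `T`. -/
def InitialState {A W F : Type} (T : DefiniteTheory A F) (M : Kripke A W F) (s : W) : Prop :=
  ∀ st ∈ T.stmts, sat M s st.form

section Aux

open Classical in
/-- Conjunction over a list of formulae. -/
noncomputable def conjList {A F : Type} (l : List (BForm A F)) : BForm A F :=
  l.foldr .conj .top

lemma sat_conjList {A W F : Type} (M : Kripke A W F) (w : W) (l : List (BForm A F)) :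
    sat M w (conjList l) ↔ ∀ φ ∈ l, sat M w φ := by
  induction l with
  | nil => simp [conjList, sat]
  | cons a t ih => simp [conjList, sat] at ih ⊢; tauto

lemma isProp_conjList {A F : Type} (l : List (BForm A F))
    (h : ∀ φ ∈ l, IsProp φ) : IsProp (conjList l) := by
  induction l with
  | nil => trivial
  | cons a t ih =>
    exact ⟨h a (by simp), ih fun φ hφ => h φ (by simp [hφ])⟩

open Classical in
/-- Characteristic fluent formula of the valuation of world `x`. -/
noncomputable def chi {A W F : Type} [Fintype F] (M : Kripke A W F) (x : W) : BForm A F :=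
  conjList ((Finset.univ : Finset F).toList.map
    fun f => if M.val x f then .atom f else .neg (.atom f))

lemma isProp_chi {A W F : Type} [Fintype F] (M : Kripke A W F) (x : W) :
    IsProp (chi M x) := by
  apply isProp_conjList
  intro φ hφ
  simp only [List.mem_map] at hφ
  obtain ⟨f, -, rfl⟩ := hφ
  split <;> trivial

lemma sat_chi {A W F : Type} [Fintype F] (M : Kripke A W F) (w x : W) :
    sat M w (chi M x) ↔ M.val w = M.val x := by
  rw [chi, sat_conjList]
  constructor
  · intro h
    funext f
    have hf := h _ (List.mem_map.2 ⟨f, by simp, rfl⟩)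
    apply propext
    by_cases hx : M.val x f
    · simp only [if_pos hx] at hf
      exact ⟨fun _ => hx, fun _ => hf⟩
    · simp only [if_neg hx] at hf
      exact ⟨fun hw => absurd hw hf, fun hxf => absurd hxf hx⟩
  · intro h φ hφ
    simp only [List.mem_map] at hφ
    obtain ⟨f, -, rfl⟩ := hφ
    by_cases hx : M.val x f
    · simpa [if_pos hx, sat, h] using hx
    · simpa [if_neg hx, sat, h] using hx

lemma csat_reach {A W F : Type} (M : Kripke A W F) {s w : W} {P : W → Prop}
    (h : ∀ k, Esat M Set.univ P k s) (hw : reach M s w) : P w := by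
  have key : ∀ k, Esat M Set.univ P k w := by
    induction hw with
    | refl => exact h
    | tail _ hbc ih =>
      intro k
      obtain ⟨i, hrel⟩ := hbc
      exact ih (k + 1) i (Set.mem_univ i) _ hrel
  exact key 0

end Aux

/-- In an initial S5-state of a definite action theory with all
worlds reachable from `s`, the relation of having identical valuations is a
bisimulation for each accessibility relation. -/
theorem stmt5 {A W F : Type} [Fintype F] (T : DefiniteTheory A F)
    (M : Kripke A W F) (s : W)
    (h5 : S5 M) (hr : ∀ u : W, reach M s u) (hI : InitialState T M s)
    (u v : W) (hsim : M.val u = M.val v) (i : A) (x : W) (hx : M.rel i u x) :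
    ∃ y : W, M.rel i v y ∧ M.val x = M.val y := by
  classical
  set φ := chi M x with hφ
  have hsatx : sat M x φ := (sat_chi M x x).2 rfl
  have hvv : M.rel i v v := (h5 i).refl v
  have hsat_at : ∀ st ∈ T.stmts, ∀ ψ, st.form = .cbel Set.univ ψ → ∀ w, sat M w ψ := by
    intro st hst ψ hform w
    have := hI st hst
    rw [hform] at this
    exact csat_reach M this (hr w)
  rcases T.definite φ (isProp_chi M x) i with hc | hc | hc
  · -- C(B_i φ)
    have hb : sat M v (.bel i φ) := hsat_at _ hc _ rfl v
    have : sat M v φ := hb v hvv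
    exact ⟨v, hvv, ((sat_chi M v x).1 this).symm⟩
  · -- C(B_i φ ∨ B_i ¬φ)
    have hb : sat M u (.disj (.bel i φ) (.bel i (.neg φ))) := hsat_at _ hc _ rfl u
    rcases hb with hb | hb
    · have : sat M u φ := hb u ((h5 i).refl u)
      have hux : M.val u = M.val x := (sat_chi M u x).1 this
      exact ⟨v, hvv, by rw [← hux, hsim]⟩
    · exact absurd hsatx (hb x hx)
  · -- C(¬B_i φ ∧ ¬B_i ¬φ)
    have hb : sat M v (.conj (.neg (.bel i φ)) (.neg (.bel i (.neg φ)))) :=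
      hsat_at _ hc _ rfl v
    have h2 : ¬ ∀ y, M.rel i v y → ¬ sat M y φ := hb.2
    push_neg at h2
    obtain ⟨y, hvy, hy⟩ := h2
    exact ⟨y, hvy, ((sat_chi M y x).1 hy).symm⟩
end

section
/- Let (M,s) be an S5 pointed Kripke structure with every world reachable from s, and suppose the valuation-equality relation ∼ (u ∼ v iff π(u)=π(v)) is a bisimulation for each B_i (i.e., if u ∼ v and (u,x) ∈ B_i then there is y with (v,y) ∈ B_i and x ∼ y). Define the quotient structure M̃ with worlds the ∼-equivalence classes, valuation inherited from representatives, and (ũ,ṽ) ∈ M̃[i] iff some u'∈ũ, v'∈ṽ have (u',v') ∈ B_i. Then M̃ is again an S5 structure (each quotient relation is reflexive, symmetric and transitive) with at most 2^{|F|} worlds. -/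
/-- The relation `∼`: two worlds are related iff they carry identical
valuations. -/
def valSetoid {A W F : Type} (M : Kripke A W F) : Setoid W := Setoid.ker M.val

/-- The quotient (reduced) Kripke structure `M̃`: worlds are `∼`-equivalence
classes, valuations are inherited, and classes are `i`-related iff some
representatives are. -/
def quotKripke {A W F : Type} (M : Kripke A W F) : Kripke A (Quotient (valSetoid M)) F where
  val := Quotient.lift M.val (fun _ _ h => h)
  rel i x y := ∃ u v : W, Quotient.mk (valSetoid M) u = x ∧ Quotient.mk (valSetoid M) v = y ∧ M.rel i u v

/-- Under S5, reachability from `s`, and the bisimulation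
property of the valuation-equality relation `∼`, the quotient structure `M̃`
is again S5 and has at most `2^{|F|}` worlds. -/
theorem stmt7 {A W F : Type} [Fintype F] (M : Kripke A W F) (s : W)
    (h5 : S5 M) (hr : ∀ u : W, reach M s u)
    (hbis : ∀ u v : W, M.val u = M.val v → ∀ (i : A) (x : W), M.rel i u x →
      ∃ y : W, M.rel i v y ∧ M.val x = M.val y) :
    S5 (quotKripke M) ∧ Nat.card (Quotient (valSetoid M)) ≤ 2 ^ Fintype.card F := by
  constructor
  · intro i
    constructor
    · intro x
      obtain ⟨u, rfl⟩ := Quotient.exists_rep x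
      exact ⟨u, u, rfl, rfl, (h5 i).refl u⟩
    · rintro x y ⟨u, v, rfl, rfl, huv⟩
      exact ⟨v, u, rfl, rfl, (h5 i).symm huv⟩
    · rintro x y z ⟨u, v, rfl, rfl, huv⟩ ⟨v', w, hv', rfl, hv'w⟩
      have hval : M.val v' = M.val v := Quotient.eq''.mp (hv'.trans rfl)
      obtain ⟨y, hvy, hwy⟩ := hbis v' v hval i w hv'w
      exact ⟨u, y, rfl, Quotient.sound hwy.symm, (h5 i).trans huv hvy⟩
  · have hinj : Function.Injective
        (Quotient.lift M.val (fun _ _ h => h) : Quotient (valSetoid M) → F → Prop) := by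
      rintro ⟨u⟩ ⟨v⟩ h
      exact Quotient.sound h
    calc Nat.card (Quotient (valSetoid M)) ≤ Nat.card (F → Prop) :=
          Nat.card_le_card_of_injective _ hinj
      _ = 2 ^ Fintype.card F := by
          classical
          rw [Nat.card_eq_fintype_card, Fintype.card_fun]
          norm_num
end

section
/- Let a be a world-altering (ontic) action executable in state (M,s), with frame of reference partitioning the agents into fully observant agents F and oblivious agents O. Let (M',s') be the successor state given by the step transition for world-altering actions. Then for every oblivious agent i ∈ O and every belief formula φ: (M',s') ⊨ B_i φ if and only if (M,s) ⊨ B_i φ. -/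
/-- The successor Kripke structure after a world-altering action.
`exec u` says the action is executable at world `u`; `newval u` is the updated
valuation of the fresh world `r(a,u)` (represented as `Sum.inr ⟨u,_⟩`);
`Fo` is the set of fully observant agents, all others being oblivious.
Old worlds (`Sum.inl`) keep all old edges; fully observant agents relate new
worlds mirroring `M`; oblivious agents point from new worlds back into the old
copy of `M`. -/
def onticSucc {A W F : Type} (M : Kripke A W F) (exec : W → Prop) (newval : W → F → Prop)
    (Fo : Set A) : Kripke A (W ⊕ {u : W // exec u}) F where
  val x := match x with
    | Sum.inl u => M.val u
    | Sum.inr u => newval u.1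
  rel i x y := match x, y with
    | Sum.inl u, Sum.inl v => M.rel i u v
    | Sum.inr u, Sum.inr v => i ∈ Fo ∧ M.rel i u.1 v.1
    | Sum.inr u, Sum.inl v => i ∉ Fo ∧ M.rel i u.1 v
    | Sum.inl _, Sum.inr _ => False

lemma esat_inl {A W F : Type} (M : Kripke A W F) (exec : W → Prop) (newval : W → F → Prop)
    (Fo : Set A) (α : Set A) (P' : (W ⊕ {u : W // exec u}) → Prop) (P : W → Prop)
    (hP : ∀ v, P' (Sum.inl v) ↔ P v) :
    ∀ k v, Esat (onticSucc M exec newval Fo) α P' k (Sum.inl v) ↔ Esat M α P k v := by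
  intro k
  induction k with
  | zero => exact fun v => hP v
  | succ k ih =>
    intro v
    constructor
    · intro h j hj u hu
      exact (ih u).mp (h j hj (Sum.inl u) hu)
    · intro h j hj u hu
      match u with
      | Sum.inl u => exact (ih u).mpr (h j hj u hu)
      | Sum.inr u => exact absurd hu (fun h => h.elim)

lemma sat_inl {A W F : Type} (M : Kripke A W F) (exec : W → Prop) (newval : W → F → Prop)
    (Fo : Set A) (φ : BForm A F) :
    ∀ v, sat (onticSucc M exec newval Fo) (Sum.inl v) φ ↔ sat M v φ := by
  induction φ with
  | top => simp [sat]
  | atom f => intro v; rfl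
  | neg φ ih => intro v; exact not_congr (ih v)
  | conj φ ψ ihφ ihψ => intro v; exact and_congr (ihφ v) (ihψ v)
  | disj φ ψ ihφ ihψ => intro v; exact or_congr (ihφ v) (ihψ v)
  | bel j φ ih =>
    intro v
    constructor
    · intro h u hu; exact (ih u).mp (h (Sum.inl u) hu)
    · intro h u hu
      match u with
      | Sum.inl u => exact (ih u).mpr (h u hu)
      | Sum.inr u => exact absurd hu (fun h => h.elim)
  | ebel α φ ih =>
    intro v
    constructor
    · intro h j hj u hu; exact (ih u).mp (h j hj (Sum.inl u) hu)
    · intro h j hj u hu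
      match u with
      | Sum.inl u => exact (ih u).mpr (h j hj u hu)
      | Sum.inr u => exact absurd hu (fun h => h.elim)
  | cbel α φ ih =>
    intro v
    constructor
    · intro h k; exact (esat_inl M exec newval Fo α _ _ ih k v).mp (h k)
    · intro h k; exact (esat_inl M exec newval Fo α _ _ ih k v).mpr (h k)

/-- After a world-altering action executable in `(M,s)`, with
fully observant agents `Fo` and all other agents oblivious, every oblivious
agent has exactly the same beliefs in the successor state as in `(M,s)`. -/
theorem stmt9 {A W F : Type} (M : Kripke A W F) (s : W)
    (exec : W → Prop) (newval : W → F → Prop) (Fo : Set A)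
    (hs : exec s) (i : A) (hi : i ∉ Fo) (φ : BForm A F) :
    sat (onticSucc M exec newval Fo) (Sum.inr ⟨s, hs⟩) (.bel i φ) ↔
      sat M s (.bel i φ) := by
  constructor
  · intro h v hv
    exact (sat_inl M exec newval Fo φ v).mp (h (Sum.inl v) ⟨hi, hv⟩)
  · intro h v hv
    match v with
    | Sum.inl v => exact (sat_inl M exec newval Fo φ v).mpr (h v hv.2)
    | Sum.inr v => exact absurd hv.1 (fun h => hi h)
end

section
/- Given a world-altering action a with precondition ψ, and the two-event update model Σ = ({σ, ε}, R, pre, sub) where R_i = {(σ,σ),(ε,ε)} for fully observant agents i and R_i = {(σ,ε),(ε,ε)} for oblivious agents i, pre(σ)=ψ, pre(ε)=⊤, sub(ε)=identity, and sub(σ) substitutes each fluent p by Ψ⁺(p,a) ∨ (p ∧ ¬Ψ⁻(p,a)): the update product state ((M ⊗ Σ), (s,σ)) is equivalent (satisfies the same belief formulae) to the state (M',s') produced by the direct step-transition semantics for world-altering actions. -/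
/-- An update model over agents `A`, events `E` and fluents `F`:
accessibility relations on events, a precondition formula for each event, and a
substitution assigning a belief formula to each fluent at each event. -/
structure UpdModel (A E F : Type) where
  rel : A → E → E → Prop
  pre : E → BForm A F
  sub : E → F → BForm A F

/-- The update product `M ⊗ Σ`: worlds are pairs `(u,τ)` with `(M,u) ⊨ pre τ`;
`(u,τ)` and `(u',τ')` are `i`-related iff both components are; the valuation of
`(u,τ)` makes `p` true iff `(M,u) ⊨ sub τ p`. -/
def updProd {A W E F : Type} (M : Kripke A W F) (U : UpdModel A E F) :
    Kripke A {p : W × E // sat M p.1 (U.pre p.2)} F where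
  val p f := sat M p.1.1 (U.sub p.1.2 f)
  rel i p q := M.rel i p.1.1 q.1.1 ∧ U.rel i p.1.2 q.1.2

/-- The two-event update model for a world-altering action with precondition
`ψ`, positive effect conditions `Ψp` and negative effect conditions `Ψm`:
event `true` is `σ` (the action happens), event `false` is `ε` (nothing
happens); fully observant agents (`Fo`) have `R_i = {(σ,σ),(ε,ε)}`, oblivious
agents have `R_i = {(σ,ε),(ε,ε)}`; `pre σ = ψ`, `pre ε = ⊤`; `sub ε` is the
identity and `sub σ` maps `p` to `Ψ⁺(p) ∨ (p ∧ ¬Ψ⁻(p))`. -/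
def onticUpd {A F : Type} (ψ : BForm A F) (Ψp Ψm : F → BForm A F) (Fo : Set A) :
    UpdModel A Bool F where
  rel i e e' := (i ∈ Fo ∧ e = e') ∨ (i ∉ Fo ∧ e' = false)
  pre e := match e with
    | true => ψ
    | false => .top
  sub e f := match e with
    | true => .disj (Ψp f) (.conj (.atom f) (.neg (Ψm f)))
    | false => .atom f


lemma Esat_iso {A W W' F : Type} {M : Kripke A W F} {M' : Kripke A W' F} {h : W → W'}
    (hsurj : Function.Surjective h)
    (hrel : ∀ i w v, M.rel i w v ↔ M'.rel i (h w) (h v))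
    {P : W → Prop} {P' : W' → Prop} (hP : ∀ w, P w ↔ P' (h w)) (α : Set A) :
    ∀ (k : ℕ) (w : W), Esat M α P k w ↔ Esat M' α P' k (h w) := by
  intro k
  induction k with
  | zero => intro w; exact hP w
  | succ k ih =>
    intro w
    constructor
    · intro H i hi v' hv'
      obtain ⟨v, rfl⟩ := hsurj v'
      exact (ih v).mp (H i hi v ((hrel i w v).mpr hv'))
    · intro H i hi v hv
      exact (ih v).mpr (H i hi (h v) ((hrel i w v).mp hv))

lemma sat_iso {A W W' F : Type} {M : Kripke A W F} {M' : Kripke A W' F} {h : W → W'}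
    (hsurj : Function.Surjective h)
    (hval : ∀ w f, M.val w f ↔ M'.val (h w) f)
    (hrel : ∀ i w v, M.rel i w v ↔ M'.rel i (h w) (h v)) :
    ∀ (φ : BForm A F) (w : W), sat M w φ ↔ sat M' (h w) φ := by
  intro φ
  induction φ with
  | top => intro w; simp [sat]
  | atom f => intro w; exact hval w f
  | neg φ ih => intro w; simp only [sat]; exact not_congr (ih w)
  | conj φ χ ih1 ih2 => intro w; simp only [sat]; exact and_congr (ih1 w) (ih2 w)
  | disj φ χ ih1 ih2 => intro w; simp only [sat]; exact or_congr (ih1 w) (ih2 w)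
  | bel i φ ih =>
    intro w
    simp only [sat]
    constructor
    · intro H v' hv'
      obtain ⟨v, rfl⟩ := hsurj v'
      exact (ih v).mp (H v ((hrel i w v).mpr hv'))
    · intro H v hv
      exact (ih v).mpr (H (h v) ((hrel i w v).mp hv))
  | ebel α φ ih =>
    intro w
    simp only [sat]
    constructor
    · intro H i hi v' hv'
      obtain ⟨v, rfl⟩ := hsurj v'
      exact (ih v).mp (H i hi v ((hrel i w v).mpr hv'))
    · intro H i hi v hv
      exact (ih v).mpr (H i hi (h v) ((hrel i w v).mp hv))
  | cbel α φ ih =>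
    intro w
    simp only [sat]
    constructor
    · intro H k
      exact (Esat_iso hsurj hrel ih α k w).mp (H k)
    · intro H k
      exact (Esat_iso hsurj hrel ih α k w).mpr (H k)

/-- The update product of `(M,s)` with the two-event update
model of a world-altering action, pointed at `(s,σ)`, is equivalent to the
state produced by the direct step-transition semantics for world-altering
actions. -/
theorem stmt12 {A W F : Type} (M : Kripke A W F) (s : W)
    (ψ : BForm A F) (Ψp Ψm : F → BForm A F) (Fo : Set A)
    (hcons : ∀ (u : W) (f : F), ¬ (sat M u (Ψp f) ∧ sat M u (Ψm f)))
    (hs : sat M s ψ) :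
    equivState (updProd M (onticUpd ψ Ψp Ψm Fo)) ⟨(s, true), hs⟩
      (onticSucc M (fun u => sat M u ψ)
        (fun u f => sat M u (Ψp f) ∨ (M.val u f ∧ ¬ sat M u (Ψm f))) Fo)
      (Sum.inr ⟨s, hs⟩) := by
  classical
  set N := updProd M (onticUpd ψ Ψp Ψm Fo) with hN
  set exec : W → Prop := fun u => sat M u ψ with hexec
  set N' := onticSucc M exec
      (fun u f => sat M u (Ψp f) ∨ (M.val u f ∧ ¬ sat M u (Ψm f))) Fo with hN'
  let h : {p : W × Bool // sat M p.1 ((onticUpd ψ Ψp Ψm Fo).pre p.2)} →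
      (W ⊕ {u : W // exec u}) := fun p =>
    match p with
    | ⟨(u, true), hp⟩ => Sum.inr ⟨u, hp⟩
    | ⟨(u, false), _⟩ => Sum.inl u
  have hsurj : Function.Surjective h := by
    rintro (u | ⟨u, hu⟩)
    · exact ⟨⟨(u, false), trivial⟩, rfl⟩
    · exact ⟨⟨(u, true), hu⟩, rfl⟩
  have hval : ∀ w f, N.val w f ↔ N'.val (h w) f := by
    rintro ⟨⟨u, (_ | _)⟩, hp⟩ f
    · simp [h, N, N', updProd, onticUpd, onticSucc, sat]
    · simp [h, N, N', updProd, onticUpd, onticSucc, sat]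
  have hrel : ∀ i w v, N.rel i w v ↔ N'.rel i (h w) (h v) := by
    rintro i ⟨⟨u, (_ | _)⟩, hp⟩ ⟨⟨v, (_ | _)⟩, hq⟩ <;>
      simp [h, N, N', updProd, onticUpd, onticSucc] <;> tauto
  intro φ
  exact sat_iso hsurj hval hrel φ ⟨(s, true), hs⟩
end

section
/- For any finite set of fluents F and finite set of agents AG, any S5 pointed Kripke structure satisfying the initial statements of a consistent definite action theory is equivalent to an S5 pointed Kripke structure with at most 2^{|F|} worlds. Consequently, up to equivalence, a consistent definite action theory has only finitely many initial S5-states. -/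
namespace Stmt13Aux

open Classical

variable {A F : Type}

noncomputable def lit (t : F → Prop) (f : F) : BForm A F :=
  if t f then .atom f else .neg (.atom f)

lemma isProp_lit (t : F → Prop) (f : F) : IsProp (lit (A := A) t f) := by
  unfold lit; split <;> simp [IsProp]

lemma sat_lit {W : Type} (M : Kripke A W F) (w : W) (t : F → Prop) (f : F) :
    sat M w (lit t f) ↔ (M.val w f ↔ t f) := by
  unfold lit; split <;> rename_i h <;> simp only [sat] <;> tauto

noncomputable def chi [Fintype F] (t : F → Prop) : BForm A F :=
  (Finset.univ : Finset F).toList.foldr (fun f acc => .conj (lit t f) acc) .top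

lemma sat_foldr {W : Type} (M : Kripke A W F) (w : W) (t : F → Prop) (l : List F) :
    sat M w (l.foldr (fun f acc => .conj (lit t f) acc) .top) ↔
      ∀ f ∈ l, (M.val w f ↔ t f) := by
  induction l with
  | nil => simp [sat]
  | cons a l ih => simp [sat, ih, sat_lit]

lemma sat_chi [Fintype F] {W : Type} (M : Kripke A W F) (w : W) (t : F → Prop) :
    sat M w (chi t) ↔ ∀ f, (M.val w f ↔ t f) := by
  rw [chi, sat_foldr]; simp

lemma isProp_chi [Fintype F] (t : F → Prop) : IsProp (chi (A := A) t) := by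
  rw [chi]
  induction (Finset.univ : Finset F).toList with
  | nil => simp [IsProp]
  | cons a l ih => exact ⟨isProp_lit t a, ih⟩

lemma sat_of_cbel {W : Type} {M : Kripke A W F} {s w : W} {ψ : BForm A F}
    (h : sat M s (.cbel Set.univ ψ)) (hr : reach M s w) : sat M w ψ := by
  have key : ∀ k, Esat M Set.univ (fun v => sat M v ψ) k w := by
    induction hr with
    | refl => exact h
    | tail _ hstep ih =>
      intro k
      obtain ⟨i, hi⟩ := hstep
      exact ih (k + 1) i (Set.mem_univ i) _ hi
  exact key 0

lemma bisim [Fintype F] {W : Type} (T : DefiniteTheory A F) (M : Kripke A W F) (s : W)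
    (h5 : S5 M) (hI : InitialState T M s) {u u' v : W}
    (hu : reach M s u) (hu' : reach M s u') (hval : M.val u = M.val u')
    (i : A) (hr : M.rel i u v) :
    ∃ v', M.rel i u' v' ∧ M.val v' = M.val v := by
  set t := M.val v with ht
  have hsatv : sat M v (chi t) := (sat_chi M v t).mpr (fun f => Iff.rfl)
  have hval' : ∀ {w : W}, sat M w (chi t) → M.val w = M.val v := by
    intro w hw
    funext f
    exact propext ((sat_chi M w t).mp hw f)
  rcases T.definite (chi t) (isProp_chi t) i with hc | hc | hc
  · have h1 : sat M u' (BForm.bel i (chi t)) := sat_of_cbel (hI _ hc) hu'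
    exact ⟨u', (h5 i).refl u', hval' (h1 u' ((h5 i).refl u'))⟩
  · have h1 : sat M u (.disj (.bel i (chi t)) (.bel i (.neg (chi t)))) :=
      sat_of_cbel (hI _ hc) hu
    have h2 : sat M u (BForm.bel i (chi t)) := by
      rcases h1 with h1 | h1
      · exact h1
      · exact absurd hsatv (h1 v hr)
    refine ⟨u', (h5 i).refl u', ?_⟩
    rw [← hval]
    exact hval' (h2 u ((h5 i).refl u))
  · have h1 : sat M u' (.conj (.neg (.bel i (chi t))) (.neg (.bel i (.neg (chi t))))) :=
      sat_of_cbel (hI _ hc) hu'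
    obtain ⟨h1a, h1b⟩ := h1
    by_contra hcon
    apply h1b
    intro v' hv' hsat
    exact hcon ⟨v', hv', hval' hsat⟩

def quot {W : Type} (M : Kripke A W F) (s : W) : Kripke A (F → Prop) F where
  val := id
  rel := fun i p q => p = q ∨
    ∃ u v, reach M s u ∧ reach M s v ∧ M.rel i u v ∧ M.val u = p ∧ M.val v = q

lemma quot_rel_intro {W : Type} {M : Kripke A W F} {s w v : W} (hw : reach M s w) {i : A}
    (hr : M.rel i w v) : (quot M s).rel i (M.val w) (M.val v) :=
  Or.inr ⟨w, v, hw, hw.tail ⟨i, hr⟩, hr, rfl, rfl⟩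

lemma quot_rel_elim [Fintype F] {W : Type} {T : DefiniteTheory A F} {M : Kripke A W F}
    {s w : W} (h5 : S5 M) (hI : InitialState T M s) (hw : reach M s w) {i : A} {q : F → Prop}
    (h : (quot M s).rel i (M.val w) q) : ∃ v, M.rel i w v ∧ M.val v = q := by
  rcases h with h | ⟨u, v0, hu, hv0, hr, h1, h2⟩
  · exact ⟨w, (h5 i).refl w, h⟩
  · obtain ⟨v, hv, hval⟩ := bisim T M s h5 hI hu hw h1 i hr
    exact ⟨v, hv, hval.trans h2⟩

lemma quot_S5 [Fintype F] {W : Type} (T : DefiniteTheory A F) (M : Kripke A W F) (s : W)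
    (h5 : S5 M) (hI : InitialState T M s) : S5 (quot M s) := by
  intro i
  constructor
  · intro p; exact Or.inl rfl
  · intro p q h
    rcases h with rfl | ⟨u, v, hu, hv, hr, rfl, rfl⟩
    · exact Or.inl rfl
    · exact Or.inr ⟨v, u, hv, hu, (h5 i).symm hr, rfl, rfl⟩
  · intro p q r h1 h2
    rcases h1 with rfl | ⟨u, v, hu, hv, hr, rfl, rfl⟩
    · exact h2
    rcases h2 with h2 | ⟨u2, v2, hu2, hv2, hr2, h3, rfl⟩
    · exact Or.inr ⟨u, v, hu, hv, hr, rfl, h2⟩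
    · obtain ⟨v', hv', heq⟩ := bisim T M s h5 hI hu2 hv h3 i hr2
      exact Or.inr ⟨u, v', hu, hv.tail ⟨i, hv'⟩, (h5 i).trans hr hv', rfl, heq⟩

lemma transfer [Fintype F] {W : Type} (T : DefiniteTheory A F) (M : Kripke A W F) (s : W)
    (h5 : S5 M) (hI : InitialState T M s) :
    ∀ (φ : BForm A F) (w : W), reach M s w → (sat M w φ ↔ sat (quot M s) (M.val w) φ) := by
  intro φ
  induction φ with
  | top => intro w _; exact Iff.rfl
  | atom f => intro w _; exact Iff.rfl
  | neg φ ih => intro w hw; exact not_congr (ih w hw)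
  | conj φ ψ ih1 ih2 => intro w hw; exact and_congr (ih1 w hw) (ih2 w hw)
  | disj φ ψ ih1 ih2 => intro w hw; exact or_congr (ih1 w hw) (ih2 w hw)
  | bel i φ ih =>
    intro w hw
    constructor
    · intro h q hq
      obtain ⟨v, hv, rfl⟩ := quot_rel_elim h5 hI hw hq
      exact (ih v (hw.tail ⟨i, hv⟩)).mp (h v hv)
    · intro h v hv
      exact (ih v (hw.tail ⟨i, hv⟩)).mpr (h _ (quot_rel_intro hw hv))
  | ebel α φ ih =>
    intro w hw
    constructor
    · intro h i hi q hq
      obtain ⟨v, hv, rfl⟩ := quot_rel_elim h5 hI hw hq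
      exact (ih v (hw.tail ⟨i, hv⟩)).mp (h i hi v hv)
    · intro h i hi v hv
      exact (ih v (hw.tail ⟨i, hv⟩)).mpr (h i hi _ (quot_rel_intro hw hv))
  | cbel α φ ih =>
    intro w hw
    have key : ∀ (k : ℕ) (w : W), reach M s w →
        (Esat M α (fun v => sat M v φ) k w ↔
          Esat (quot M s) α (fun q => sat (quot M s) q φ) k (M.val w)) := by
      intro k
      induction k with
      | zero => intro w hw; exact ih w hw
      | succ k ihk =>
        intro w hw
        constructor
        · intro h i hi q hq
          obtain ⟨v, hv, rfl⟩ := quot_rel_elim h5 hI hw hq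
          exact (ihk v (hw.tail ⟨i, hv⟩)).mp (h i hi v hv)
        · intro h i hi v hv
          exact (ihk v (hw.tail ⟨i, hv⟩)).mpr (h i hi _ (quot_rel_intro hw hv))
    exact forall_congr' fun k => key k w hw

lemma kripkeFinite (A W F : Type) [Finite A] [Finite W] [Finite F] :
    Finite (Kripke A W F) := by
  have : Finite ((W → F → Prop) × (A → W → W → Prop)) := by infer_instance
  exact Finite.of_injective (fun M : Kripke A W F => (M.val, M.rel)) (by
    intro M N h
    cases M; cases N
    simp only [Prod.mk.injEq] at h
    simp [h.1, h.2])

end Stmt13Aux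

/-- Every S5 state satisfying the initial statements of a
definite action theory is equivalent to an S5 state with at most `2^{|F|}`
worlds; consequently, up to equivalence, the theory has only finitely many
initial S5-states. -/
theorem stmt13 {A F : Type} [Fintype A] [Fintype F] (T : DefiniteTheory A F) :
    (∀ (W : Type) (M : Kripke A W F) (s : W), S5 M → InitialState T M s →
      ∃ (W' : Type) (M' : Kripke A W' F) (s' : W'),
        S5 M' ∧ Finite W' ∧ Nat.card W' ≤ 2 ^ Fintype.card F ∧ equivState M s M' s') ∧
    (∃ Reps : Set (Kripke A (F → Prop) F × (F → Prop)), Reps.Finite ∧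
      ∀ (W : Type) (M : Kripke A W F) (s : W), S5 M → InitialState T M s →
        ∃ r ∈ Reps, equivState M s r.1 r.2) := by
  classical
  have main : ∀ (W : Type) (M : Kripke A W F) (s : W), S5 M → InitialState T M s →
      S5 (Stmt13Aux.quot M s) ∧ equivState M s (Stmt13Aux.quot M s) (M.val s) := by
    intro W M s h5 hI
    exact ⟨Stmt13Aux.quot_S5 T M s h5 hI,
      fun φ => Stmt13Aux.transfer T M s h5 hI φ s Relation.ReflTransGen.refl⟩
  constructor
  · intro W M s h5 hI
    refine ⟨F → Prop, Stmt13Aux.quot M s, M.val s, (main W M s h5 hI).1, inferInstance, ?_,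
      (main W M s h5 hI).2⟩
    simp [Nat.card_eq_fintype_card, Fintype.card_fun, Fintype.card_prop]
  · refine ⟨Set.univ, ?_, ?_⟩
    · have : Finite (Kripke A (F → Prop) F) := Stmt13Aux.kripkeFinite A (F → Prop) F
      exact Set.finite_univ
    · intro W M s h5 hI
      exact ⟨(Stmt13Aux.quot M s, M.val s), Set.mem_univ _, (main W M s h5 hI).2⟩
end
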